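/- Let G be a finite simple graph on vertex set V, let H be a finite simple graph with a t-clique subgraph on vertices K ⊆ V(H), and let H' = H − K. Construct G' with vertex set (⋃_{i∈K} V_i) ∪ V(H'), where each V_i is a copy of V, edges between copies in different parts V_i, V_j mirror edges of G, each vertex h of H' is joined to all of V_i whenever h is adjacent to i in H, and edges within H' are as in H. If G contains a t-clique, then G' contains a (not necessarily induced) subgraph isomorphic to H. -/

import Mathlib

/-- The reduction graph `G'`: one copy `V_i` of the vertex set of `G` for each clique vertex
`i ∈ K`, plus the vertices of `H' = H − K`. Edges between copies mirror `G`, a vertex `h ∉ K`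
is joined to all of `V_i` whenever `h` is adjacent to `i` in `H`, and edges among the vertices
outside `K` are as in `H`. -/
def reductionGraph {V α : Type*} (G : SimpleGraph V) (H : SimpleGraph α) (K : Set α) :
    SimpleGraph ((K × V) ⊕ {a : α // a ∉ K}) where
  Adj x y :=
    match x, y with
    | .inl (i, u), .inl (j, v) => H.Adj i j ∧ G.Adj u v
    | .inl (i, _), .inr h => H.Adj (h : α) i
    | .inr h, .inl (i, _) => H.Adj (h : α) i
    | .inr h, .inr h' => H.Adj (h : α) h'
  symm := by
    constructor
    rintro (⟨i, u⟩ | h) (⟨j, v⟩ | h') hadj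
    · exact ⟨hadj.1.symm, hadj.2.symm⟩
    · exact hadj
    · exact hadj
    · exact hadj.symm
  loopless := by
    constructor
    rintro (⟨i, u⟩ | h) hadj
    · exact H.irrefl hadj.1
    · exact H.irrefl hadj

theorem reduction_forward {V α : Type*} (G : SimpleGraph V) (H : SimpleGraph α)
    (t : ℕ) (K : Finset α) (hK : H.IsNClique t K)
    (sG : Finset V) (hsG : G.IsNClique t sG) :
    ∃ f : α → ({a : α // a ∈ (K : Set α)} × V) ⊕ {a : α // a ∉ (K : Set α)},
      Function.Injective f ∧
        ∀ a b : α, H.Adj a b → (reductionGraph G H (K : Set α)).Adj (f a) (f b) := by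
  classical
  have hcard : K.card = sG.card := hK.card_eq.trans hsG.card_eq.symm
  obtain ⟨e⟩ : Nonempty (K ≃ sG) := ⟨Finset.equivOfCardEq hcard⟩
  refine ⟨fun a => if h : a ∈ K then .inl (⟨a, h⟩, (e ⟨a, h⟩ : V)) else .inr ⟨a, h⟩, ?_, ?_⟩
  · intro a b hab
    by_cases ha : a ∈ K <;> by_cases hb : b ∈ K <;> simp [ha, hb] at hab
    · exact hab
    · exact hab
  · intro a b hab
    by_cases ha : a ∈ K <;> by_cases hb : b ∈ K <;>
      simp only [dif_pos, dif_neg, ha, hb, reductionGraph]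
    · refine ⟨hab, hsG.1 ?_ ?_ ?_⟩
      · exact (e ⟨a, ha⟩).2
      · exact (e ⟨b, hb⟩).2
      · intro h
        apply hab.ne
        have := e.injective (Subtype.ext h)
        exact congrArg Subtype.val this
    · exact hab.symm
    · exact hab
    · exact hab
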